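/- Let h : 𝒯 → 𝒜 be a homology theory that is full. Let U →α V →μ Y →ξ U[1] be a distinguished triangle in 𝒯 such that h(α) is a monomorphism in 𝒜. If P is an object of 𝒯 and λ : P → V is a morphism with h(μ ∘ λ) = 0, then there exists a morphism λ' : P → V such that μ ∘ λ' = μ ∘ λ and h(λ') = 0. -/

import Mathlib

open CategoryTheory Category Limits Pretriangulated

/-- Let `h` be a full homology theory and `U ⟶α V ⟶μ Y ⟶ξ U⟦1⟧` a
distinguished triangle with `h(α)` a monomorphism.  If `λ : P ⟶ V` satisfies
`h(μ ∘ λ) = 0`, then there is `λ' : P ⟶ V` with `μ ∘ λ' = μ ∘ λ` and `h(λ') = 0`. -/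
theorem lift_correction
    {T : Type*} [Category T] [HasZeroObject T] [Preadditive T] [HasShift T ℤ]
    [∀ n : ℤ, (shiftFunctor T n).Additive] [Pretriangulated T]
    {A : Type*} [Category A] [Abelian A] [HasShift A ℤ]
    [∀ n : ℤ, (shiftFunctor A n).Additive]
    (h : T ⥤ A) [h.Additive] [h.CommShift ℤ] [h.IsHomological] [h.Full]
    {U V Y : T} (α : U ⟶ V) (μ : V ⟶ Y) (ξ : Y ⟶ U⟦(1:ℤ)⟧)
    (hT : Triangle.mk α μ ξ ∈ distTriang T)
    (hmono : Mono (h.map α))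
    (P : T) (l : P ⟶ V) (hl : h.map (l ≫ μ) = 0) :
    ∃ l' : P ⟶ V, l' ≫ μ = l ≫ μ ∧ h.map l' = 0 := by
  have hex := h.map_distinguished_exact _ hT
  have hk : h.map l ≫ ((shortComplexOfDistTriangle (Triangle.mk α μ ξ) hT).map h).g = 0 := by
    show h.map l ≫ h.map μ = 0
    rw [← h.map_comp, hl]
  have : Mono ((shortComplexOfDistTriangle (Triangle.mk α μ ξ) hT).map h).f := hmono
  obtain ⟨φ, hφ⟩ := hex.lift' (h.map l) hk
  obtain ⟨f, hf⟩ := h.map_surjective (X := P) (Y := U) φ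
  refine ⟨l - f ≫ α, ?_, ?_⟩
  · have h12 : α ≫ μ = 0 := comp_distTriang_mor_zero₁₂ _ hT
    rw [Preadditive.sub_comp, assoc, h12, comp_zero, sub_zero]
  · rw [Functor.map_sub, Functor.map_comp, hf]
    rw [show h.map α = ((shortComplexOfDistTriangle (Triangle.mk α μ ξ) hT).map h).f from rfl,
      ]
    exact sub_eq_zero.mpr hφ.symm
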